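/- arXiv:2206.09182 — 2 statements merged into one kernel-verified Lean document; each statement's English description precedes it below -/
import Mathlib

section
/- Fix R > 0 and ε > 0, and let ĥₙ be the majority over n i.i.d. realizations of the randomized classifier ĥ that classifies f_R(x) = sgn(‖x‖₂ − R) in probability with a probability function p(x) = Pr[ĥ(x)=1] that is a continuous strictly increasing function of ‖x‖₂ with p = 1/2 at ‖x‖₂ = R. Let μ be any probability distribution on R^d assigning zero mass to the sphere {‖x‖₂ = R}. Then there exists n ∈ ℕ such that E[‖f_R − ĥₙ‖²_{L²(μ)}] ≤ ε. -/
open MeasureTheory ProbabilityTheory Filter Topology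

/-- The Euclidean norm on `Fin d → ℝ`. -/
noncomputable def enorm' (d : ℕ) (x : Fin d → ℝ) : ℝ := Real.sqrt (∑ i, (x i) ^ 2)

lemma measurable_realSign : Measurable Real.sign := by
  unfold Real.sign
  exact Measurable.ite (measurableSet_lt measurable_id measurable_const) measurable_const
    (Measurable.ite (measurableSet_lt measurable_const measurable_id) measurable_const
      measurable_const)

lemma abs_realSign_le (r : ℝ) : |Real.sign r| ≤ 1 := by
  rcases Real.sign_apply_eq r with h | h | h <;> rw [h] <;> norm_num

lemma sign_diff_sq_le (a b : ℝ) : (Real.sign a - Real.sign b) ^ 2 ≤ 4 := by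
  have ha := abs_le.mp (abs_realSign_le a)
  have hb := abs_le.mp (abs_realSign_le b)
  nlinarith [ha.1, ha.2, hb.1, hb.2]

-- Preimage measure computation for a ±1-valued random variable.
open Classical in
lemma preimage_meas_pm {Ω : Type*} [MeasurableSpace Ω] (P : Measure Ω) [IsProbabilityMeasure P]
    (X : Ω → ℝ) (hX : Measurable X) (hv : ∀ ω, X ω = 1 ∨ X ω = -1)
    (s : Set ℝ) :
    P (X ⁻¹' s) = (if (1:ℝ) ∈ s then P {ω | X ω = 1} else 0)
      + (if (-1:ℝ) ∈ s then 1 - P {ω | X ω = 1} else 0) := by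
  have hA : MeasurableSet {ω | X ω = 1} := hX (measurableSet_singleton 1)
  by_cases h1 : (1:ℝ) ∈ s <;> by_cases h2 : (-1:ℝ) ∈ s <;> simp only [h1, h2, if_true, if_false]
  · have : X ⁻¹' s = Set.univ := by
      ext ω; rcases hv ω with h | h <;> simp [h, h1, h2] <;> norm_num
    rw [this, measure_univ, add_comm]
    exact (tsub_add_cancel_of_le prob_le_one).symm
  · have : X ⁻¹' s = {ω | X ω = 1} := by
      ext ω; rcases hv ω with h | h <;> simp [h, h1, h2] <;> norm_num
    rw [this, add_zero]
  · have : X ⁻¹' s = {ω | X ω = 1}ᶜ := by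
      ext ω; rcases hv ω with h | h <;> simp [h, h1, h2] <;> norm_num
    rw [this, measure_compl hA (measure_ne_top _ _), measure_univ, zero_add]
  · have : X ⁻¹' s = ∅ := by
      ext ω; rcases hv ω with h | h <;> simp [h, h1, h2] <;> norm_num
    simp [this]

lemma map_eq_pm {Ω Ω' : Type*} [MeasurableSpace Ω] [MeasurableSpace Ω']
    (P : Measure Ω) (Q : Measure Ω') [IsProbabilityMeasure P] [IsProbabilityMeasure Q]
    (X : Ω → ℝ) (Y : Ω' → ℝ) (hX : Measurable X) (hY : Measurable Y)
    (hXv : ∀ ω, X ω = 1 ∨ X ω = -1) (hYv : ∀ ω, Y ω = 1 ∨ Y ω = -1)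
    (h : P {ω | X ω = 1} = Q {ω | Y ω = 1}) :
    Measure.map X P = Measure.map Y Q := by
  ext s hs
  rw [Measure.map_apply hX hs, Measure.map_apply hY hs,
    preimage_meas_pm P X hX hXv s, preimage_meas_pm Q Y hY hYv s, h]

/-- Fix `R > 0`, `ε > 0`. Let `ĥ` be a randomized `{−1,1}`-classifier whose probability of
outputting `1` is `g(‖x‖₂)` where `g` is continuous, strictly increasing on `[0,∞)` with
values in `[0,1]` and `g(R) = 1/2` (so `ĥ` classifies `f_R(x) = sgn(‖x‖₂ − R)` in
probability).  Let `ĥₙ` be the majority of `n` i.i.d. realizations `H 0, …, H (n−1)`.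
For any probability measure `μ` on `ℝ^d` assigning zero mass to the sphere `{‖x‖₂ = R}`,
there exists `n` with `E[‖f_R − ĥₙ‖²_{L²(μ)}] ≤ ε`. -/
theorem stmt7 {Ω : Type*} [MeasurableSpace Ω] (P : Measure Ω) [IsProbabilityMeasure P]
    (d : ℕ) (R ε : ℝ) (hR : 0 < R) (hε : 0 < ε)
    (μ : Measure (Fin d → ℝ)) [IsProbabilityMeasure μ]
    (hsphere : μ {x | enorm' d x = R} = 0)
    (g : ℝ → ℝ) (hgc : Continuous g) (hgm : StrictMonoOn g (Set.Ici 0))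
    (hg01 : ∀ r, g r ∈ Set.Icc (0 : ℝ) 1) (hgR : g R = 1/2)
    (H : ℕ → Ω → (Fin d → ℝ) → ℝ)
    (hjm : ∀ i, Measurable fun q : Ω × (Fin d → ℝ) => H i q.1 q.2)
    (hval : ∀ i ω x, H i ω x = 1 ∨ H i ω x = -1)
    (hdist : ∀ i x, P {ω | H i ω x = 1} = ENNReal.ofReal (g (enorm' d x)))
    (hindep : ∀ x, iIndepFun (fun i ω => H i ω x) P) :
    ∃ n : ℕ,
      (∫ ω, ∫ x,
        (Real.sign (enorm' d x - R)
          - Real.sign (∑ i ∈ Finset.range n, H i ω x)) ^ 2 ∂μ ∂P) ≤ ε := by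
  classical
  set F : ℕ → Ω × (Fin d → ℝ) → ℝ := fun n q =>
    (Real.sign (enorm' d q.2 - R)
      - Real.sign (∑ i ∈ Finset.range n, H i q.1 q.2)) ^ 2 with hF
  have henorm : Continuous (enorm' d) := by
    unfold enorm'
    exact Real.continuous_sqrt.comp (by continuity)
  have hFmeas : ∀ n, Measurable (F n) := by
    intro n
    apply Measurable.pow_const
    exact (measurable_realSign.comp
        (((henorm.measurable).comp measurable_snd).sub measurable_const)).sub
      (measurable_realSign.comp (Finset.measurable_sum _ fun i _ => hjm i))
  have hFle : ∀ n q, ‖F n q‖ ≤ 4 := by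
    intro n q
    rw [Real.norm_eq_abs, abs_of_nonneg (sq_nonneg _)]
    exact sign_diff_sq_le _ _
  -- pointwise (in x) convergence of the inner integral to 0
  have key : ∀ x : Fin d → ℝ, enorm' d x ≠ R →
      Tendsto (fun n => ∫ ω, F n (ω, x) ∂P) atTop (𝓝 0) := by
    intro x hx
    set r := enorm' d x with hr
    have hr0 : 0 ≤ r := Real.sqrt_nonneg _
    set p := g r with hp
    set X : ℕ → Ω → ℝ := fun i ω => H i ω x with hX
    have hXm : ∀ i, Measurable (X i) := fun i =>
      (hjm i).comp (measurable_id.prodMk measurable_const)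
    have hXval : ∀ i ω, X i ω = 1 ∨ X i ω = -1 := fun i ω => hval i ω x
    have hXbd : ∀ i ω, ‖X i ω‖ ≤ 1 := by
      intro i ω; rcases hXval i ω with h | h <;> rw [h] <;> norm_num
    have hint : Integrable (X 0) P :=
      (integrable_const (1:ℝ)).mono' (hXm 0).aestronglyMeasurable
        (Filter.Eventually.of_forall fun ω => hXbd 0 ω)
    have hpair : Pairwise (Function.onFun (IndepFun · · P) X) := fun i j hij =>
      (hindep x).indepFun hij
    have hident : ∀ i, IdentDistrib (X i) (X 0) P P := by
      intro i
      exact ⟨(hXm i).aemeasurable, (hXm 0).aemeasurable,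
        map_eq_pm P P (X i) (X 0) (hXm i) (hXm 0) (hXval i) (hXval 0)
          (by rw [show {ω | X i ω = 1} = {ω | H i ω x = 1} from rfl, hdist i x,
            show {ω | X 0 ω = 1} = {ω | H 0 ω x = 1} from rfl, hdist 0 x])⟩
    -- expectation of X 0
    have hA : MeasurableSet {ω | X 0 ω = 1} := (hXm 0) (measurableSet_singleton 1)
    have hXeq : X 0 = fun ω => 2 * Set.indicator {ω | X 0 ω = 1} (fun _ => (1:ℝ)) ω - 1 := by
      funext ω
      rcases hXval 0 ω with h | h <;> simp [Set.indicator_apply, h] <;> norm_num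
    have hE : (∫ ω, X 0 ω ∂P) = 2 * p - 1 := by
      have hind : Integrable (Set.indicator {ω | X 0 ω = 1} (fun _ => (1:ℝ))) P :=
        (integrable_const (1:ℝ)).indicator hA
      rw [hXeq]
      rw [integral_sub (hind.const_mul 2) (integrable_const 1), integral_const_mul,
        integral_indicator_const (1:ℝ) hA]
      have : P {ω | X 0 ω = 1} = ENNReal.ofReal p := hdist 0 x
      rw [Measure.real, this, ENNReal.toReal_ofReal (hg01 r).1]
      simp [hp]
    have hslln := ProbabilityTheory.strong_law_ae X hint hpair hident
    rw [hE] at hslln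
    -- a.e. pointwise convergence of F n (ω, x) to 0
    have hptwise : ∀ᵐ ω ∂P, Tendsto (fun n => F n (ω, x)) atTop (𝓝 0) := by
      filter_upwards [hslln] with ω hω
      have hmain : ∀ᶠ n in atTop, F n (ω, x) = 0 := by
        rcases hx.lt_or_gt with hlt | hlt
        · -- r < R : p < 1/2, mean negative, sign -1
          have hplt : p < 1/2 := by
            rw [← hgR]; exact hgm (Set.mem_Ici.mpr hr0) (Set.mem_Ici.mpr hR.le) hlt
          have hm : 2 * p - 1 < 0 := by linarith
          have h1 := hω.eventually (eventually_lt_nhds hm)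
          filter_upwards [h1, eventually_ge_atTop 1] with n hn hn1
          have hn0 : (0:ℝ) < n := by exact_mod_cast hn1
          have hS : (∑ i ∈ Finset.range n, X i ω) < 0 := by
            rw [smul_eq_mul] at hn
            have := mul_neg_of_pos_of_neg hn0 hn
            rwa [← mul_assoc, mul_inv_cancel₀ hn0.ne', one_mul] at this
          simp only [hF]
          rw [Real.sign_of_neg (show r - R < 0 by linarith),
            Real.sign_of_neg hS]
          ring
        · -- R < r : p > 1/2, mean positive, sign 1
          have hplt : 1/2 < p := by
            rw [← hgR]; exact hgm (Set.mem_Ici.mpr hR.le) (Set.mem_Ici.mpr hr0) hlt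
          have hm : 0 < 2 * p - 1 := by linarith
          have h1 := hω.eventually (eventually_gt_nhds hm)
          filter_upwards [h1, eventually_ge_atTop 1] with n hn hn1
          have hn0 : (0:ℝ) < n := by exact_mod_cast hn1
          have hS : 0 < (∑ i ∈ Finset.range n, X i ω) := by
            rw [smul_eq_mul] at hn
            have := mul_pos hn0 hn
            rwa [← mul_assoc, mul_inv_cancel₀ hn0.ne', one_mul] at this
          simp only [hF]
          rw [Real.sign_of_pos (show 0 < r - R by linarith),
            Real.sign_of_pos hS]
          ring
      exact Tendsto.congr' (by filter_upwards [hmain] with n hn; exact hn.symm)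
        tendsto_const_nhds
    have := tendsto_integral_of_dominated_convergence (fun _ => (4:ℝ))
      (fun n => ((hFmeas n).comp (measurable_id.prodMk measurable_const)).aestronglyMeasurable)
      (integrable_const 4)
      (fun n => Filter.Eventually.of_forall fun ω => hFle n (ω, x))
      hptwise
    simpa using this
  -- outer dominated convergence
  have hmeas_inner : ∀ n, AEStronglyMeasurable (fun x => ∫ ω, F n (ω, x) ∂P) μ := fun n =>
    ((hFmeas n).stronglyMeasurable.integral_prod_left' (μ := P)).aestronglyMeasurable
  have hbd_inner : ∀ n, ∀ᵐ x ∂μ, ‖∫ ω, F n (ω, x) ∂P‖ ≤ 4 := by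
    intro n
    refine Filter.Eventually.of_forall fun x => ?_
    calc ‖∫ ω, F n (ω, x) ∂P‖
        ≤ 4 * (P Set.univ).toReal := norm_integral_le_of_norm_le_const
          (Filter.Eventually.of_forall fun ω => hFle n (ω, x))
      _ = 4 := by simp
  have hae : ∀ᵐ x ∂μ, enorm' d x ≠ R := by
    rw [ae_iff]
    convert hsphere using 2
    ext x; simp
  have h2 : Tendsto (fun n => ∫ x, ∫ ω, F n (ω, x) ∂P ∂μ) atTop (𝓝 0) := by
    have := tendsto_integral_of_dominated_convergence (μ := μ) (fun _ => (4:ℝ))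
      hmeas_inner (integrable_const 4) hbd_inner
      (by filter_upwards [hae] with x hx; exact key x hx)
    simpa using this
  obtain ⟨n, hn⟩ := (h2.eventually (gt_mem_nhds hε)).exists
  refine ⟨n, ?_⟩
  have hint : Integrable (Function.uncurry fun ω x => F n (ω, x)) (P.prod μ) := by
    refine (integrable_const (4:ℝ)).mono' ?_ ?_
    · exact (hFmeas n).aestronglyMeasurable
    · exact Filter.Eventually.of_forall fun q => hFle n q
  have hswap := integral_integral_swap hint
  calc (∫ ω, ∫ x, (Real.sign (enorm' d x - R)
          - Real.sign (∑ i ∈ Finset.range n, H i ω x)) ^ 2 ∂μ ∂P)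
      = ∫ x, ∫ ω, F n (ω, x) ∂P ∂μ := hswap
    _ ≤ ε := hn.le
end

section
/- Let f : R → R be K-Lipschitz and let ζ be a probability distribution on R with full support. Define a random linear classifier h by: sample t ∼ ζ, set p = (t, f(t)), then choose between the two slope-±K lines through p with equal probability. Then for every q = (x, y) with y > f(x), Pr[h(q) = 1] > 1/2, and similarly Pr[h(q) = −1] > 1/2 whenever y < f(x). That is, this distribution of linear classifiers separates f in probability. -/
open MeasureTheory ENNReal

lemma aux13 (ζ : Measure ℝ) [IsProbabilityMeasure ζ]
    (hfull : ∀ a b : ℝ, a < b → 0 < ζ (Set.Ioo a b))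
    (x : ℝ) (gp gm : ℝ → ℝ) (hcp : Continuous gp) (hcm : Continuous gm)
    (hxp : 0 < gp x) (hxm : 0 < gm x) (hall : ∀ t, 0 < gp t ∨ 0 < gm t) :
    1/2 < (ζ.prod (PMF.uniformOfFintype Bool).toMeasure)
      {tc : ℝ × Bool | (if tc.2 then Real.sign (gp tc.1) else Real.sign (gm tc.1)) = 1} := by
  set μB := (PMF.uniformOfFintype Bool).toMeasure
  have hhalf : ∀ c : Bool, μB {c} = 2⁻¹ := by
    intro c
    rw [PMF.toMeasure_apply_singleton _ _ (measurableSet_singleton _),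
      PMF.uniformOfFintype_apply]
    simp
  set Tp := gp ⁻¹' Set.Ioi 0 with hTpdef
  set Tm := gm ⁻¹' Set.Ioi 0 with hTmdef
  have hTpo : IsOpen Tp := isOpen_Ioi.preimage hcp
  have hTmo : IsOpen Tm := isOpen_Ioi.preimage hcm
  have hxmem : x ∈ Tp ∩ Tm := ⟨hxp, hxm⟩
  obtain ⟨ε, hε, hball⟩ := Metric.isOpen_iff.mp (hTpo.inter hTmo) x hxmem
  have hζI : 0 < ζ (Tp ∩ Tm) := by
    refine lt_of_lt_of_le (hfull (x - ε) (x + ε) (by linarith)) (measure_mono ?_)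
    rw [← Real.ball_eq_Ioo]; exact hball
  have hAB : Disjoint (Tp ×ˢ ({true} : Set Bool)) (Tm ×ˢ ({false} : Set Bool)) := by
    rw [Set.disjoint_left]
    rintro ⟨t, c⟩ ⟨-, h1⟩ ⟨-, h2⟩
    simp_all
  have hsub : (Tp ×ˢ ({true} : Set Bool)) ∪ (Tm ×ˢ ({false} : Set Bool)) ⊆
      {tc : ℝ × Bool | (if tc.2 then Real.sign (gp tc.1) else Real.sign (gm tc.1)) = 1} := by
    rintro ⟨t, c⟩ (⟨ht, hc⟩ | ⟨ht, hc⟩) <;>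
      simp only [Set.mem_singleton_iff] at hc <;> subst hc <;>
      simp only [Set.mem_setOf_eq, if_true, if_false, Bool.false_eq_true]
    · exact Real.sign_of_pos ht
    · exact Real.sign_of_pos ht
  have huniv : Tp ∪ Tm = Set.univ := by
    ext t; simp only [Set.mem_univ, iff_true, Set.mem_union]
    rcases hall t with h | h
    · exact Or.inl h
    · exact Or.inr h
  have hsum : (1 : ℝ≥0∞) < ζ Tp + ζ Tm := by
    have := measure_union_add_inter (μ := ζ) Tp hTmo.measurableSet
    rw [huniv, measure_univ] at this
    rw [← this]
    exact ENNReal.lt_add_right one_ne_top hζI.ne'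
  calc (1 : ℝ≥0∞)/2 = 1 * 2⁻¹ := by rw [one_div, one_mul]
    _ < (ζ Tp + ζ Tm) * 2⁻¹ := by
        rw [mul_comm (1 : ℝ≥0∞), mul_comm (ζ Tp + ζ Tm)]
        exact ENNReal.mul_lt_mul_right (by norm_num) (by norm_num) hsum
    _ = ζ Tp * 2⁻¹ + ζ Tm * 2⁻¹ := add_mul _ _ _
    _ = (ζ.prod μB) (Tp ×ˢ ({true} : Set Bool)) + (ζ.prod μB) (Tm ×ˢ ({false} : Set Bool)) := by
        rw [Measure.prod_prod, Measure.prod_prod, hhalf, hhalf]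
    _ = (ζ.prod μB) ((Tp ×ˢ ({true} : Set Bool)) ∪ (Tm ×ˢ ({false} : Set Bool))) := by
        rw [measure_union hAB (hTmo.measurableSet.prod (measurableSet_singleton _))]
    _ ≤ _ := measure_mono hsub


/-- Let `f : ℝ → ℝ` be `K`-Lipschitz and `ζ` a probability distribution on `ℝ` with full
support.  Sample `t ∼ ζ`, set `p = (t, f t)`, and choose with equal probability one of the
two lines of slope `±K` through `p` as a linear classifier `h`.  Then for every
`q = (x,y)` with `y > f x`, `Pr[h(q) = 1] > 1/2`, and for `y < f x`,
`Pr[h(q) = −1] > 1/2`: this distribution of linear classifiers separates `f` in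
probability. -/
theorem stmt13 (K : ℝ) (hK : 0 ≤ K) (f : ℝ → ℝ)
    (hf : ∀ a b : ℝ, |f a - f b| ≤ K * |a - b|)
    (ζ : Measure ℝ) [IsProbabilityMeasure ζ]
    (hfull : ∀ a b : ℝ, a < b → 0 < ζ (Set.Ioo a b)) :
    ∀ x y : ℝ,
      (f x < y →
        1/2 < (ζ.prod (PMF.uniformOfFintype Bool).toMeasure)
          {tc : ℝ × Bool |
            (if tc.2 then Real.sign (K * x + y - (K * tc.1 + f tc.1))
              else Real.sign (-K * x + y - (-K * tc.1 + f tc.1))) = 1}) ∧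
      (y < f x →
        1/2 < (ζ.prod (PMF.uniformOfFintype Bool).toMeasure)
          {tc : ℝ × Bool |
            (if tc.2 then Real.sign (K * x + y - (K * tc.1 + f tc.1))
              else Real.sign (-K * x + y - (-K * tc.1 + f tc.1))) = -1}) := by
  have hfc : Continuous f := by
    have : LipschitzWith ⟨K, hK⟩ f := by
      apply LipschitzWith.of_dist_le_mul
      intro a b
      rw [Real.dist_eq, Real.dist_eq]
      exact hf a b
    exact this.continuous
  intro x y
  constructor
  · intro hlt
    apply aux13 ζ hfull x (fun t => K * x + y - (K * t + f t))
        (fun t => -K * x + y - (-K * t + f t))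
        (continuous_const.sub ((continuous_const.mul continuous_id).add hfc))
        (continuous_const.sub ((continuous_const.mul continuous_id).add hfc))
    · show (0:ℝ) < K * x + y - (K * x + f x); linarith
    · show (0:ℝ) < -K * x + y - (-K * x + f x); linarith
    · intro t
      have h1 : f t - f x ≤ K * |t - x| := le_trans (le_abs_self _) (hf t x)
      rcases le_total x t with h | h
      · right
        show (0:ℝ) < -K * x + y - (-K * t + f t)
        rw [abs_of_nonneg (by linarith : (0:ℝ) ≤ t - x)] at h1
        linarith
      · left
        show (0:ℝ) < K * x + y - (K * t + f t)
        rw [abs_of_nonpos (by linarith : t - x ≤ (0:ℝ))] at h1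
        linarith
  · intro hlt
    have hset : {tc : ℝ × Bool |
            (if tc.2 then Real.sign (K * x + y - (K * tc.1 + f tc.1))
              else Real.sign (-K * x + y - (-K * tc.1 + f tc.1))) = -1}
        = {tc : ℝ × Bool |
            (if tc.2 then Real.sign (-(K * x + y - (K * tc.1 + f tc.1)))
              else Real.sign (-(-K * x + y - (-K * tc.1 + f tc.1)))) = 1} := by
      ext ⟨t, c⟩
      cases c <;> simp only [Set.mem_setOf_eq, if_true, if_false, Bool.false_eq_true,
        Real.sign_neg] <;> constructor <;> intro h <;> linarith
    rw [hset]
    apply aux13 ζ hfull x (fun t => -(K * x + y - (K * t + f t)))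
        (fun t => -(-K * x + y - (-K * t + f t)))
        (continuous_const.sub ((continuous_const.mul continuous_id).add hfc)).neg
        (continuous_const.sub ((continuous_const.mul continuous_id).add hfc)).neg
    · show (0:ℝ) < -(K * x + y - (K * x + f x)); linarith
    · show (0:ℝ) < -(-K * x + y - (-K * x + f x)); linarith
    · intro t
      have h1 : f x - f t ≤ K * |x - t| := le_trans (le_abs_self _) (hf x t)
      rcases le_total x t with h | h
      · left
        show (0:ℝ) < -(K * x + y - (K * t + f t))
        rw [abs_of_nonpos (by linarith : x - t ≤ (0:ℝ))] at h1
        linarith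
      · right
        show (0:ℝ) < -(-K * x + y - (-K * t + f t))
        rw [abs_of_nonneg (by linarith : (0:ℝ) ≤ x - t)] at h1
        linarith
end
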